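/- Let C be a category with pullbacks and f : W ⟶ U a morphism. The base-change functor Over.pullback f : Over U ⥤ Over W admits a right adjoint if and only if the endofunctor of the slice category Over U given by binary product with the object (f : W ⟶ U) of Over U admits a right adjoint (so that f can serve as a power for cartesian exponentiation in Over U). -/

import Mathlib

open CategoryTheory CategoryTheory.Limits

universe v u

section Aux

variable {D : Type*} [Category D] [HasBinaryProducts D] [HasTerminal D] [HasPullbacks D]
  {X : D} {E : D ⥤ D} (adj : prod.functor.obj X ⊣ E)

/-- The "name of the identity" morphism `⊤ ⟶ X^X`. -/
noncomputable def auxIdName : (⊤_ D) ⟶ E.obj X :=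
  adj.homEquiv _ _ (prod.fst : X ⨯ (⊤_ D) ⟶ X)

lemma aux_from_comp_idName (A : D) :
    terminal.from A ≫ auxIdName adj = adj.homEquiv A X (prod.fst : X ⨯ A ⟶ X) := by
  rw [auxIdName]
  refine (adj.homEquiv_naturality_left (terminal.from A) _).symm.trans ?_
  congr 1
  erw [prod.map_fst, Category.comp_id]

include adj in
/-- If `X ⨯ -` has a right adjoint, then `Over.star X` has a right adjoint. -/
lemma aux_star_isLeftAdjoint : (Over.star X).IsLeftAdjoint := by
  refine (Adjunction.adjunctionOfEquivRight
    (F := Over.star X)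
    (G_obj := fun h => pullback (E.map h.hom) (auxIdName adj))
    (fun A h =>
      { toFun := fun k => pullback.lift (adj.homEquiv A h.left k.left) (terminal.from A) (by
          refine (adj.homEquiv_naturality_right _ _).symm.trans ?_
          rw [aux_from_comp_idName adj A]
          congr 1
          exact (Over.w k).trans (prod.lift_fst _ _))
        invFun := fun a => Over.homMk ((adj.homEquiv A h.left).symm (a ≫ pullback.fst _ _)) (by
          refine (adj.homEquiv_naturality_right_symm _ _).symm.trans ?_
          rw [Category.assoc, pullback.condition, ← Category.assoc,
            Subsingleton.elim (a ≫ pullback.snd _ _) (terminal.from A),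
            aux_from_comp_idName adj A]
          exact (Equiv.symm_apply_apply _ _).trans (prod.lift_fst _ _).symm)
        left_inv := fun k => by
          ext
          exact (congrArg (adj.homEquiv A h.left).symm (pullback.lift_fst _ _ _)).trans
            (Equiv.symm_apply_apply _ _)
        right_inv := fun a => by
          apply pullback.hom_ext
          · exact (pullback.lift_fst _ _ _).trans (Equiv.apply_symm_apply _ _)
          · exact Subsingleton.elim _ _ }) ?_).isLeftAdjoint
  intro A' A h g k
  apply pullback.hom_ext
  · exact (pullback.lift_fst _ _ _).trans ((adj.homEquiv_naturality_left g k.left).trans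
      ((congrArg (g ≫ ·) (pullback.lift_fst _ _ _).symm).trans (Category.assoc _ _ _).symm))
  · exact Subsingleton.elim _ _

end Aux

/-- A morphism `f : W ⟶ U` is powerful (i.e. the base-change functor
`Over.pullback f : Over U ⥤ Over W` admits a right adjoint) if and only if the
endofunctor of `Over U` given by binary product with the object `f` of `Over U`
admits a right adjoint (so that `f` can serve as a power for cartesian exponentiation
in `Over U`). -/
theorem powerful_iff_prod_functor_isLeftAdjoint {C : Type u} [Category.{v} C]
    [HasPullbacks C] {W U : C} (f : W ⟶ U) :
    haveI : HasBinaryProducts (Over U) :=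
      Over.ConstructProducts.over_binaryProduct_of_pullback
    ((Over.pullback f).IsLeftAdjoint ↔ (prod.functor.obj (Over.mk f)).IsLeftAdjoint) := by
  haveI : HasBinaryProducts (Over U) :=
    Over.ConstructProducts.over_binaryProduct_of_pullback
  -- the iterated slice equivalence `Over (Over.mk f) ≌ Over W`
  let e : Over (Over.mk f) ≌ Over W := (Over.mk f).iteratedSliceEquiv
  -- `Over.map f` is isomorphic to `e.inverse ⋙ Over.forget (Over.mk f)`
  let iso1 : e.inverse ⋙ Over.forget (Over.mk f) ≅ Over.map f :=
    NatIso.ofComponents (fun g => Over.isoMk (Iso.refl _) (by simp [e]; exact Category.id_comp _))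
      (fun {g g'} k => by
        ext
        simp [e]
        exact (Category.comp_id _).trans (Category.id_comp _).symm)
  -- hence `Over.map f ⊣ Over.star (Over.mk f) ⋙ e.functor`
  let adj3 : Over.map f ⊣ (Over.star (Over.mk f) ⋙ e.functor) :=
    ((e.symm.toAdjunction).comp (Over.forgetAdjStar (Over.mk f))).ofNatIsoLeft iso1
  -- by uniqueness of right adjoints
  let isoP : Over.pullback f ≅ Over.star (Over.mk f) ⋙ e.functor :=
    (Over.mapPullbackAdj f).rightAdjointUniq adj3
  -- `prod.functor.obj (Over.mk f) ≅ star ⋙ forget`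
  let iso2 : Over.star (Over.mk f) ⋙ Over.forget (Over.mk f) ≅ prod.functor.obj (Over.mk f) :=
    NatIso.ofComponents (fun g => Iso.refl _)
      (fun {g g'} k => by erw [Category.comp_id, Category.id_comp]; rfl)
  constructor
  · intro hP
    -- star ≅ pullback ⋙ e.inverse
    let isoS : Over.pullback f ⋙ e.inverse ≅ Over.star (Over.mk f) :=
      Functor.isoWhiskerRight isoP e.inverse ≪≫ Functor.associator _ _ _ ≪≫
        Functor.isoWhiskerLeft _ e.unitIso.symm ≪≫ Functor.rightUnitor _
    haveI : e.inverse.IsLeftAdjoint := e.isLeftAdjoint_inverse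
    exact Functor.isLeftAdjoint_of_iso
      ((Functor.associator _ _ _).symm ≪≫ Functor.isoWhiskerRight isoS (Over.forget _) ≪≫ iso2 :
        Over.pullback f ⋙ (e.inverse ⋙ Over.forget (Over.mk f)) ≅ _)
  · intro hprod
    haveI : (Over.star (Over.mk f)).IsLeftAdjoint :=
      aux_star_isLeftAdjoint (Adjunction.ofIsLeftAdjoint _)
    haveI : e.functor.IsLeftAdjoint := e.isLeftAdjoint_functor
    exact Functor.isLeftAdjoint_of_iso isoP.symm
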